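/- Let g ∈ GL(d,ℝ) with a₂(g)/a₁(g) < 1, and let w ∈ ℝ^d be a unit vector. Then ‖g*w‖/‖g*‖ ≤ d(u(g), w^⊥) + a₂(g)/a₁(g), where d(u(g), w^⊥) denotes the gap distance from the direction of maximum growth of g to the projective hyperplane orthogonal to w. -/

import Mathlib

open scoped RealInnerProductSpace
open Filter

noncomputable section

/-- Euclidean space `ℝ^d`. -/
abbrev E (d : ℕ) := EuclideanSpace ℝ (Fin d)

/-- The operator norm of a `d × d` real matrix, acting on Euclidean space. -/
def opNorm {d : ℕ} (g : Matrix (Fin d) (Fin d) ℝ) : ℝ :=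
  ‖(Matrix.toEuclideanLin g).toContinuousLinearMap‖

/-- The action of a matrix on a Euclidean vector. -/
def act {d : ℕ} (g : Matrix (Fin d) (Fin d) ℝ) (v : E d) : E d :=
  Matrix.toEuclideanLin g v

/-- The norm of `v ∧ w` in `Λ² ℝ^d`. -/
def wedgeNorm {d : ℕ} (v w : E d) : ℝ :=
  Real.sqrt (‖v‖ ^ 2 * ‖w‖ ^ 2 - ⟪v, w⟫ ^ 2)

/-- The gap distance `d(v̄, w̄) = ‖v ∧ w‖ / (‖v‖ ‖w‖)` on projective space. -/
def gapDist {d : ℕ} (v w : E d) : ℝ := wedgeNorm v w / (‖v‖ * ‖w‖)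

/-- The operator norm of `Λ² g`, computed on the decomposable generators coming from
orthonormal pairs. -/
def lam2Norm {d : ℕ} (g : Matrix (Fin d) (Fin d) ℝ) : ℝ :=
  sSup {r | ∃ v w : E d, ‖v‖ = 1 ∧ ‖w‖ = 1 ∧ ⟪v, w⟫ = 0 ∧
    r = wedgeNorm (act g v) (act g w)}

/-- Spectral radius: the maximal absolute value of the complex eigenvalues. -/
def specRad {d : ℕ} (g : Matrix (Fin d) (Fin d) ℝ) : ℝ :=
  sSup ((fun z : ℂ => ‖z‖) '' spectrum ℂ (g.map (algebraMap ℝ ℂ)))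

/-- Singular value decomposition data: `g = L Δ R` with `L, R` orthogonal and
`Δ = diagonal a`, the `a i` positive and in decreasing order (so `a i = a_{i+1}(g)`). -/
structure SVD {d : ℕ} (g : Matrix (Fin d) (Fin d) ℝ) (L : Matrix (Fin d) (Fin d) ℝ)
    (a : Fin d → ℝ) (R : Matrix (Fin d) (Fin d) ℝ) : Prop where
  orthL : L * L.transpose = 1
  orthR : R * R.transpose = 1
  anti : Antitone a
  pos : ∀ i, 0 < a i
  eq : g = L * Matrix.diagonal a * R

/-- The `i`-th standard basis vector of `ℝ^d`. -/
def stdVec {d : ℕ} (i : Fin d) : E d := EuclideanSpace.single i 1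

lemma act_mul {d : ℕ} (A B : Matrix (Fin d) (Fin d) ℝ) (v : E d) :
    act (A * B) v = act A (act B v) := by
  simp [act, Matrix.toEuclideanLin_apply, Matrix.mulVec_mulVec]

lemma act_one {d : ℕ} (v : E d) : act 1 v = v := by
  simp [act, Matrix.toEuclideanLin_apply]

lemma act_apply {d : ℕ} (A : Matrix (Fin d) (Fin d) ℝ) (v : E d) (i : Fin d) :
    act A v i = ∑ j, A i j * v j := rfl

lemma norm_sq_eq {d : ℕ} (x : E d) : ‖x‖ ^ 2 = ∑ i, (x i) ^ 2 := by
  rw [EuclideanSpace.norm_eq, Real.sq_sqrt]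
  · simp [sq_abs]
  · positivity

lemma inner_act {d : ℕ} (A : Matrix (Fin d) (Fin d) ℝ) (h : A.transpose * A = 1)
    (v u : E d) : ⟪act A v, act A u⟫ = ⟪v, u⟫ := by
  have h1 : act A.transpose (act A u) = u := by
    rw [← act_mul, h, act_one]
  have h2 : Matrix.toEuclideanLin A.transpose = LinearMap.adjoint (Matrix.toEuclideanLin A) := by
    have e : A.transpose = A.conjTranspose := by
      ext i j; simp [Matrix.conjTranspose_apply]
    rw [e, Matrix.toEuclideanLin_conjTranspose_eq_adjoint]
  calc ⟪act A v, act A u⟫ = ⟪v, act A.transpose (act A u)⟫ := by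
        rw [act, act, act, h2, LinearMap.adjoint_inner_right]
    _ = ⟪v, u⟫ := by rw [h1]

lemma norm_act {d : ℕ} (A : Matrix (Fin d) (Fin d) ℝ) (h : A.transpose * A = 1)
    (v : E d) : ‖act A v‖ = ‖v‖ := by
  have := inner_act A h v v
  rw [real_inner_self_eq_norm_sq, real_inner_self_eq_norm_sq] at this
  nlinarith [norm_nonneg (act A v), norm_nonneg v]

lemma act_diagonal {d : ℕ} (a : Fin d → ℝ) (y : E d) (i : Fin d) :
    act (Matrix.diagonal a) y i = a i * y i :=
  Matrix.mulVec_diagonal a y i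

lemma zero_lt_of_two_le' {d : ℕ} (hd : 2 ≤ d) : 0 < d := by omega

lemma one_lt_of_two_le' {d : ℕ} (hd : 2 ≤ d) : 1 < d := by omega

lemma diag_bound {d : ℕ} (hd : 2 ≤ d) (a : Fin d → ℝ) (anti : Antitone a)
    (pos : ∀ i, 0 < a i) (y : E d) (hy : ‖y‖ = 1) :
    ‖act (Matrix.diagonal a) y‖ ≤
      a ⟨0, zero_lt_of_two_le' hd⟩ * |y ⟨0, zero_lt_of_two_le' hd⟩| + a ⟨1, one_lt_of_two_le' hd⟩ := by
  set i0 : Fin d := ⟨0, by omega⟩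
  set i1 : Fin d := ⟨1, by omega⟩
  have hsum : ∑ i, (y i) ^ 2 = 1 := by rw [← norm_sq_eq, hy]; norm_num
  have hkey : ‖act (Matrix.diagonal a) y‖ ^ 2 ≤ (a i0 * |y i0| + a i1) ^ 2 := by
    rw [norm_sq_eq]
    have e1 : ∀ i : Fin d, (act (Matrix.diagonal a) y i) ^ 2 = (a i)^2 * (y i)^2 := by
      intro i; rw [act_diagonal]; ring
    simp only [e1]
    have split : ∑ i, (a i)^2 * (y i)^2
        = (a i0)^2 * (y i0)^2 + ∑ i ∈ Finset.univ.erase i0, (a i)^2 * (y i)^2 :=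
      (Finset.add_sum_erase _ _ (Finset.mem_univ i0)).symm
    have splity : ∑ i, (y i)^2
        = (y i0)^2 + ∑ i ∈ Finset.univ.erase i0, (y i)^2 :=
      (Finset.add_sum_erase _ _ (Finset.mem_univ i0)).symm
    have tb : ∑ i ∈ Finset.univ.erase i0, (a i)^2 * (y i)^2
        ≤ (a i1)^2 * ∑ i ∈ Finset.univ.erase i0, (y i)^2 := by
      rw [Finset.mul_sum]
      apply Finset.sum_le_sum
      intro i hi
      have hne : i ≠ i0 := Finset.ne_of_mem_erase hi
      have h1i : i1 ≤ i := by
        have : (1 : ℕ) ≤ i.val := by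
          rcases Nat.eq_zero_or_pos i.val with h0 | h0
          · exact absurd (Fin.ext h0) hne
          · omega
        exact this
      have hai : a i ≤ a i1 := anti h1i
      have hpi := pos i
      have hsq : a i ^ 2 ≤ a i1 ^ 2 := by nlinarith
      exact mul_le_mul_of_nonneg_right hsq (sq_nonneg (y i))
    have hrest : ∑ i ∈ Finset.univ.erase i0, (y i)^2 ≤ 1 := by
      nlinarith [sq_nonneg (y i0)]
    have hp0 := pos i0
    have hp1 := pos i1
    nlinarith [abs_nonneg (y i0), sq_abs (y i0),
      mul_le_mul_of_nonneg_left hrest (sq_nonneg (a i1)),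
      mul_nonneg (mul_nonneg hp0.le (abs_nonneg (y i0))) hp1.le]
  have hrhs : 0 ≤ a i0 * |y i0| + a i1 := by
    have := pos i0; have := pos i1
    positivity
  nlinarith [norm_nonneg (act (Matrix.diagonal a) y)]

lemma gap_lb {d : ℕ} (u x w : E d) (hu : ‖u‖ = 1) (hw : ‖w‖ = 1)
    (hx : x ≠ 0) (hxw : ⟪x, w⟫ = 0) : |⟪u, w⟫| ≤ gapDist u x := by
  set c : ℝ := ⟪u, w⟫ with hc
  have hx0 : (0:ℝ) < ‖x‖ := norm_pos_iff.mpr hx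
  have hwx : ⟪w, x⟫ = 0 := by rw [real_inner_comm]; exact hxw
  have key : ⟪u, x⟫ ^ 2 ≤ (1 - c ^ 2) * ‖x‖ ^ 2 := by
    have h1 : ⟪u - c • w, x⟫ = ⟪u, x⟫ := by
      rw [inner_sub_left, real_inner_smul_left, hwx]; ring
    have h2 : ‖u - c • w‖ ^ 2 = 1 - c ^ 2 := by
      have hcw : ‖c • w‖ ^ 2 = c ^ 2 := by
        rw [norm_smul, hw, mul_one, Real.norm_eq_abs, sq_abs]
      rw [norm_sub_sq_real, real_inner_smul_right, hcw, hu, ← hc]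
      ring
    have h3 := abs_real_inner_le_norm (u - c • w) x
    calc ⟪u, x⟫ ^ 2 = |⟪u - c • w, x⟫| ^ 2 := by rw [h1, sq_abs]
      _ ≤ (‖u - c • w‖ * ‖x‖) ^ 2 := by
          apply pow_le_pow_left₀ (abs_nonneg _) h3
      _ = (1 - c ^ 2) * ‖x‖ ^ 2 := by rw [mul_pow, h2]
  have hwn : wedgeNorm u x = Real.sqrt (‖x‖ ^ 2 - ⟪u, x⟫ ^ 2) := by
    rw [wedgeNorm, hu]; norm_num
  rw [gapDist, hwn, hu, one_mul, le_div_iff₀ hx0]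
  have e : |c| * ‖x‖ = Real.sqrt (c ^ 2 * ‖x‖ ^ 2) := by
    rw [Real.sqrt_mul (sq_nonneg c), Real.sqrt_sq_eq_abs, Real.sqrt_sq (norm_nonneg x)]
  rw [e]
  apply Real.sqrt_le_sqrt
  nlinarith

/-- For `g ∈ GL(d,ℝ)` with `a₂(g)/a₁(g) < 1` and a unit vector `w`,
`‖g*w‖/‖g*‖ ≤ d(u(g), w^⊥) + a₂(g)/a₁(g)`, where `u(g) = [L e₁]` and `d(u(g), w^⊥)` is the
infimum of gap distances from `u(g)` to projective points of the hyperplane `w^⊥`. -/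
theorem stmt_3 {d : ℕ} (hd : 2 ≤ d) (g L R : Matrix (Fin d) (Fin d) ℝ)
    (hg : IsUnit g) (a : Fin d → ℝ) (h : SVD g L a R)
    (hgap : a ⟨1, by omega⟩ / a ⟨0, by omega⟩ < 1)
    (w : E d) (hw : ‖w‖ = 1) :
    ‖act g.transpose w‖ / opNorm g.transpose ≤
      sInf {r | ∃ x : E d, x ≠ 0 ∧ ⟪x, w⟫ = 0 ∧
          r = gapDist (act L (stdVec ⟨0, by omega⟩)) x} +
        a ⟨1, by omega⟩ / a ⟨0, by omega⟩ := by
  obtain ⟨orthL, orthR, anti, pos, heq⟩ := h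
  have h0d : 0 < d := by omega
  have h1d : 1 < d := by omega
  set i0 : Fin d := ⟨0, h0d⟩ with hi0
  set i1 : Fin d := ⟨1, h1d⟩ with hi1
  show ‖act g.transpose w‖ / opNorm g.transpose ≤
      sInf {r | ∃ x : E d, x ≠ 0 ∧ ⟪x, w⟫ = 0 ∧
          r = gapDist (act L (stdVec i0)) x} + a i1 / a i0
  set S := {r | ∃ x : E d, x ≠ 0 ∧ ⟪x, w⟫ = 0 ∧ r = gapDist (act L (stdVec i0)) x} with hS
  have hLtL : L.transpose * L = 1 := mul_eq_one_comm.mp orthL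
  have hLt : L.transpose.transpose * L.transpose = 1 := by
    rw [Matrix.transpose_transpose]; exact orthL
  have hRt : R.transpose.transpose * R.transpose = 1 := by
    rw [Matrix.transpose_transpose]; exact orthR
  set u : E d := act L (stdVec i0) with hudef
  have hstd : ‖stdVec i0‖ = 1 := by simp [stdVec]
  have hu : ‖u‖ = 1 := by rw [hudef, norm_act L hLtL, hstd]
  set y : E d := act L.transpose w with hy
  have hyn : ‖y‖ = 1 := by rw [hy, norm_act _ hLt, hw]
  have hgt : g.transpose = R.transpose * (Matrix.diagonal a * L.transpose) := by
    rw [heq, Matrix.transpose_mul, Matrix.transpose_mul, Matrix.diagonal_transpose]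
  have hactgt : ∀ v : E d,
      act g.transpose v = act R.transpose (act (Matrix.diagonal a) (act L.transpose v)) := by
    intro v; rw [hgt, act_mul, act_mul]
  have hnorm_gtw : ‖act g.transpose w‖ ≤ a i0 * |y i0| + a i1 := by
    rw [hactgt, norm_act _ hRt]
    exact diag_bound hd a anti pos y hyn
  have hwL : act L y = w := by rw [hy, ← act_mul, orthL, act_one]
  have hc : ⟪u, w⟫ = y i0 := by
    rw [← hwL, hudef, inner_act L hLtL]
    simp [stdVec, EuclideanSpace.inner_single_left]
  have hgtu : ‖act g.transpose u‖ = a i0 := by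
    rw [hactgt, norm_act _ hRt]
    have e0 : act L.transpose u = stdVec i0 := by
      rw [hudef, ← act_mul, hLtL, act_one]
    rw [e0]
    have e : act (Matrix.diagonal a) (stdVec i0) = a i0 • stdVec i0 := by
      ext i
      rw [act_diagonal]
      by_cases hii : i = i0 <;>
        simp [stdVec, EuclideanSpace.single_apply, hii]
    rw [e, norm_smul, hstd, Real.norm_eq_abs, abs_of_pos (pos i0), mul_one]
  have hop : a i0 ≤ opNorm g.transpose := by
    have hle := (Matrix.toEuclideanLin g.transpose).toContinuousLinearMap.le_opNorm u
    have e : ((Matrix.toEuclideanLin g.transpose).toContinuousLinearMap u : E d)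
        = act g.transpose u := rfl
    rw [e, hgtu, hu, mul_one] at hle
    exact hle
  have hoppos : 0 < opNorm g.transpose := lt_of_lt_of_le (pos i0) hop
  -- nonemptiness of S
  have hex : ∃ x : E d, x ≠ 0 ∧ ⟪x, w⟫ = 0 := by
    have hwne : w ≠ 0 := by
      intro h0; rw [h0, norm_zero] at hw; norm_num at hw
    have hne : ((ℝ ∙ w)ᗮ : Submodule ℝ (E d)) ≠ ⊥ := by
      intro hbot
      have htop : (ℝ ∙ w) = ⊤ := Submodule.orthogonal_eq_bot_iff.mp hbot
      have h1 : Module.finrank ℝ (ℝ ∙ w) = 1 := finrank_span_singleton hwne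
      have h2 : Module.finrank ℝ (E d) = d := by simp
      rw [htop] at h1
      rw [finrank_top] at h1
      omega
    obtain ⟨x, hxmem, hx0⟩ := (Submodule.ne_bot_iff _).mp hne
    refine ⟨x, hx0, ?_⟩
    have hwmem : w ∈ (ℝ ∙ w : Submodule ℝ (E d)) := Submodule.mem_span_singleton_self w
    have := (Submodule.mem_orthogonal _ x).mp hxmem w hwmem
    rw [real_inner_comm]; exact this
  obtain ⟨x₀, hx₀, hx₀w⟩ := hex
  have hSne : S.Nonempty := ⟨gapDist u x₀, ⟨x₀, hx₀, hx₀w, rfl⟩⟩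
  have hlbS : ∀ r ∈ S, |⟪u, w⟫| ≤ r := by
    rintro r ⟨x, hx, hxw, rfl⟩
    exact gap_lb u x w hu hw hx hxw
  have hsinf : |⟪u, w⟫| ≤ sInf S := le_csInf hSne hlbS
  have main : ‖act g.transpose w‖ / opNorm g.transpose ≤ |⟪u, w⟫| + a i1 / a i0 := by
    rw [div_le_iff₀ hoppos]
    have hq : a i1 / a i0 * a i0 = a i1 := div_mul_cancel₀ _ (pos i0).ne'
    have habs : |⟪u, w⟫| = |y i0| := by rw [hc]
    have hnn : 0 ≤ |y i0| + a i1 / a i0 :=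
      add_nonneg (abs_nonneg _) (div_nonneg (pos i1).le (pos i0).le)
    have h1 : a i0 * |y i0| + a i1 ≤ (|y i0| + a i1 / a i0) * opNorm g.transpose := by
      calc a i0 * |y i0| + a i1 = (|y i0| + a i1 / a i0) * a i0 := by
            rw [add_mul, hq]; ring
        _ ≤ (|y i0| + a i1 / a i0) * opNorm g.transpose :=
            mul_le_mul_of_nonneg_left hop hnn
    rw [habs]
    linarith
  linarith
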